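/- Reduction correctness for #SAT: let n ≥ 1, let φ : (Fin n → Bool) → Bool, and let r be a real number with |r - (H_n * D_φ * H_n) 0ⁿ 0ⁿ| < 1 / 2^n. Then |#φ - 2^(n-1) * (1 - r)| < 1/2, so the number of satisfying assignments #φ equals the nearest integer to 2^(n-1) * (1 - r). -/

import Mathlib

open Finset

/-- The `n`-qubit Walsh–Hadamard matrix. -/
noncomputable def walshHadamard (n : ℕ) : Matrix (Fin n → Bool) (Fin n → Bool) ℝ :=
  fun x y =>
    (-1 : ℝ) ^ (Finset.univ.filter (fun i : Fin n => x i = true ∧ y i = true)).card /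
      Real.sqrt (2 ^ n)

/-- The phase-oracle matrix of `φ`. -/
def phaseOracle (n : ℕ) (φ : (Fin n → Bool) → Bool) :
    Matrix (Fin n → Bool) (Fin n → Bool) ℝ :=
  Matrix.diagonal (fun x => (-1 : ℝ) ^ (if φ x then 1 else 0))

lemma entry_eq (n : ℕ) (φ : (Fin n → Bool) → Bool) :
    (walshHadamard n * phaseOracle n φ * walshHadamard n)
      (fun _ => false) (fun _ => false)
    = 1 - 2 * (Fintype.card {x : Fin n → Bool // φ x = true} : ℝ) / 2 ^ n := by
  have hs : Real.sqrt (2 ^ n) * Real.sqrt (2 ^ n) = 2 ^ n :=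
    Real.mul_self_sqrt (by positivity)
  simp only [Matrix.mul_apply, phaseOracle, Matrix.diagonal, walshHadamard,
    Matrix.of_apply, Bool.false_eq_true, false_and, and_false, Finset.filter_false,
    card_empty, pow_zero, mul_ite, mul_zero, Finset.sum_ite_eq, Finset.sum_ite_eq', Finset.mem_univ, if_true, one_div]
  have h1 : ∀ x : Fin n → Bool,
      (Real.sqrt (2 ^ n))⁻¹ * (-1 : ℝ) ^ (if φ x then 1 else 0) * (Real.sqrt (2 ^ n))⁻¹
      = ((-1 : ℝ) ^ (if φ x then 1 else 0)) / 2 ^ n := by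
    intro x
    field_simp
    rw [Real.sq_sqrt (by positivity)]
  rw [Finset.sum_congr rfl (fun x _ => h1 x), ← Finset.sum_div]
  have h2 : ∑ x : Fin n → Bool, ((-1 : ℝ) ^ (if φ x then 1 else 0))
      = 2 ^ n - 2 * (Fintype.card {x : Fin n → Bool // φ x = true} : ℝ) := by
    have : ∀ x, ((-1 : ℝ) ^ (if φ x then 1 else 0))
        = 1 - 2 * (if φ x then (1:ℝ) else 0) := by
      intro x; by_cases hx : φ x <;> simp [hx] <;> norm_num
    simp only [this]
    rw [Finset.sum_sub_distrib, ← Finset.mul_sum, Finset.sum_boole]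
    simp [Fintype.card_subtype, Fintype.card_fun]
  rw [h2]
  have : (2:ℝ) ^ n ≠ 0 := by positivity
  field_simp

/-- Reduction correctness for `#SAT`: if `r` approximates the `(0ⁿ, 0ⁿ)` entry
of `H_n * D_φ * H_n` to within `1/2^n`, then the number of satisfying
assignments `#φ` is within `1/2` of `2^(n-1) * (1 - r)`, hence equals its
nearest integer. -/
theorem sharpSAT_reduction_correct (n : ℕ) (hn : 1 ≤ n)
    (φ : (Fin n → Bool) → Bool) (r : ℝ)
    (h : |r - (walshHadamard n * phaseOracle n φ * walshHadamard n)
        (fun _ => false) (fun _ => false)| < 1 / 2 ^ n) :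
    |(Fintype.card {x : Fin n → Bool // φ x = true} : ℝ) -
        2 ^ (n - 1) * (1 - r)| < 1 / 2 ∧
      (Fintype.card {x : Fin n → Bool // φ x = true} : ℤ) =
        round (2 ^ (n - 1) * (1 - r) : ℝ) := by
  rw [entry_eq] at h
  set k : ℝ := (Fintype.card {x : Fin n → Bool // φ x = true} : ℝ) with hk
  set E : ℝ := 1 - 2 * k / 2 ^ n with hE
  have h2 : (2:ℝ) ^ (n-1) * 2 = 2 ^ n := by
    rw [← pow_succ]
    congr 1
    omega
  have hkey : k - 2 ^ (n-1) * (1 - r) = 2 ^ (n-1) * (r - E) := by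
    have : (2:ℝ)^(n-1) * (2 * k / 2^n) = k := by
      rw [show (2:ℝ)^(n-1) * (2 * k / 2^n) = (2^(n-1) * 2) * k / 2^n by ring, h2]
      field_simp
    rw [hE]; linarith [this]
  have habs : |k - 2 ^ (n-1) * (1 - r)| < 1 / 2 := by
    rw [hkey, abs_mul, abs_of_pos (by positivity : (0:ℝ) < 2^(n-1))]
    calc (2:ℝ)^(n-1) * |r - E| < 2^(n-1) * (1 / 2^n) := by
          apply mul_lt_mul_of_pos_left h (by positivity)
      _ = 1 / 2 := by
          rw [← h2]; field_simp
  refine ⟨habs, ?_⟩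
  have habs' := abs_lt.mp habs
  rw [round_eq, eq_comm, Int.floor_eq_iff]
  constructor
  · push_cast [hk]; linarith [habs'.2]
  · push_cast [hk]; linarith [habs'.1]
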